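/- Let W be a window, v ∈ ℤ^N(W), and let I ⊆ [N] be nonempty with either I ⊆ [N]₊ or I ⊆ [N]₋. Then Λ_I appears in the specialization of Λ̃_W at v if and only if μ(v) − ∑_{i∈I} a_i ∈ −W. -/

import Mathlib

open Finset

/-- Key identity: if `w = v` off `I`, then `∑ a i * w i = ∑ a i * v i - ∑_{i∈I} a i * (v i - w i)`. -/
lemma sum_eq_sub_aux (N : ℕ) (a v w : Fin N → ℤ) (I : Finset (Fin N))
    (hw : ∀ i ∉ I, w i = v i) :
    ∑ i, a i * w i = (∑ i, a i * v i) - ∑ i ∈ I, a i * (v i - w i) := by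
  have h : ∑ i ∈ I, a i * (v i - w i) = ∑ i, a i * (v i - w i) :=
    Finset.sum_subset (Finset.subset_univ I) (fun i _ hi => by rw [hw i hi]; ring)
  rw [h, ← Finset.sum_sub_distrib]
  congr 1; ext i; ring

/-- Lemma (lm:mix2): for `v ∈ ℤ^N(W)` and a nonempty `I` of positive or negative type,
`Λ_I` appears in the specialization of `Λ̃_W` at `v` iff `μ(v) − ∑_{i∈I} a_i ∈ −W`. -/
theorem lambda_I_appears_iff_shift_in_window
    (N : ℕ) (hN : 1 ≤ N) (a : Fin N → ℤ) (ha : ∀ i, a i ≠ 0)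
    (hpos : ∃ i, 0 < a i) (hneg : ∃ i, a i < 0)
    (a₀ b₀ : ℤ) (hab : a₀ ≤ b₀)
    (v : Fin N → ℤ) (hv : a₀ ≤ ∑ i, a i * v i ∧ ∑ i, a i * v i ≤ b₀)
    (I : Finset (Fin N)) (hne : I.Nonempty)
    (hI : (∀ i ∈ I, 0 < a i) ∨ (∀ i ∈ I, a i < 0)) :
    (∃ w : Fin N → ℤ,
      (a₀ ≤ ∑ i, a i * w i ∧ ∑ i, a i * w i ≤ b₀) ∧
      (∀ i ∈ I, w i < v i) ∧ (∀ i ∉ I, w i = v i)) ↔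
    (a₀ ≤ (∑ i, a i * v i) - ∑ i ∈ I, a i ∧ (∑ i, a i * v i) - ∑ i ∈ I, a i ≤ b₀) := by
  constructor
  · rintro ⟨w, ⟨hw1, hw2⟩, hlt, heq⟩
    have hid := sum_eq_sub_aux N a v w I heq
    rcases hI with hIp | hIn
    · -- all a i > 0 on I
      have hS : ∑ i ∈ I, a i ≤ ∑ i ∈ I, a i * (v i - w i) := by
        apply Finset.sum_le_sum
        intro i hi
        have h1 : 1 ≤ v i - w i := by have := hlt i hi; omega
        nlinarith [hIp i hi]
      have hSpos : 0 < ∑ i ∈ I, a i :=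
        Finset.sum_pos (fun i hi => hIp i hi) hne
      constructor
      · omega
      · omega
    · -- all a i < 0 on I
      have hS : ∑ i ∈ I, a i * (v i - w i) ≤ ∑ i ∈ I, a i := by
        apply Finset.sum_le_sum
        intro i hi
        have h1 : 1 ≤ v i - w i := by have := hlt i hi; omega
        nlinarith [hIn i hi]
      have hSneg : ∑ i ∈ I, a i < 0 :=
        Finset.sum_neg (fun i hi => hIn i hi) hne
      constructor
      · omega
      · omega
  · rintro ⟨h1, h2⟩
    refine ⟨fun i => if i ∈ I then v i - 1 else v i, ?_, ?_, ?_⟩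
    · have hid := sum_eq_sub_aux N a v (fun i => if i ∈ I then v i - 1 else v i) I
        (by intro i hi; simp [hi])
      have : ∑ i ∈ I, a i * (v i - (if i ∈ I then v i - 1 else v i)) = ∑ i ∈ I, a i := by
        apply Finset.sum_congr rfl
        intro i hi; simp [hi]
      rw [this] at hid
      beta_reduce at hid ⊢
      omega
    · intro i hi; simp [hi]
    · intro i hi; simp [hi]
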